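/- Let (X,d) be a metric space and let x,y,z,w ∈ X be four distinct points. Then exactly one of the following holds: (a) {x,y,z,w} admits an isometric embedding into ℝ³; (b) {x,y,z,w} is under-distance with respect to {y,w}; (c) {x,y,z,w} is over-distance with respect to {y,w}. -/

import Mathlib

noncomputable section


/-- `{x,y,z,w}` is under-distance with respect to `{y,w}`: every configuration in `ℝ³`
realizing the five distances `d(x,y), d(y,z), d(z,x), d(x,w), d(w,z)` puts the points
corresponding to `y` and `w` strictly farther apart than `d(y,w)`. -/
def UnderDistance {X : Type*} [MetricSpace X] (x y z w : X) : Prop :=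
  ∀ x' y' z' w' : EuclideanSpace ℝ (Fin 3),
    dist x' y' = dist x y → dist y' z' = dist y z → dist z' x' = dist z x →
    dist x' w' = dist x w → dist w' z' = dist w z →
    dist y w < dist y' w'

/-- `{x,y,z,w}` is over-distance with respect to `{y,w}`. -/
def OverDistance {X : Type*} [MetricSpace X] (x y z w : X) : Prop :=
  ∀ x' y' z' w' : EuclideanSpace ℝ (Fin 3),
    dist x' y' = dist x y → dist y' z' = dist y z → dist z' x' = dist z x →
    dist x' w' = dist x w → dist w' z' = dist w z →
    dist y' w' < dist y w

/-- `{x,y,z,w}` admits an isometric embedding into `ℝ³`. -/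
def EmbedsInR3 {X : Type*} [MetricSpace X] (x y z w : X) : Prop :=
  ∃ x' y' z' w' : EuclideanSpace ℝ (Fin 3),
    dist x' y' = dist x y ∧ dist x' z' = dist x z ∧ dist x' w' = dist x w ∧
    dist y' z' = dist y z ∧ dist y' w' = dist y w ∧ dist z' w' = dist z w



open RealInnerProductSpace in
private lemma realization_bound' (a b c e f p1 q1 p2 q2 : ℝ) (ha : 0 < a)
    (hq1 : 0 ≤ q1) (hq2 : 0 ≤ q2)
    (h1 : p1^2 + q1^2 = b^2) (h2 : (a - p1)^2 + q1^2 = c^2)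
    (h3 : p2^2 + q2^2 = e^2) (h4 : (a - p2)^2 + q2^2 = f^2)
    (x' y' z' w' : EuclideanSpace ℝ (Fin 3))
    (d1 : dist x' y' = b) (d2 : dist y' z' = c) (d3 : dist z' x' = a)
    (d4 : dist x' w' = e) (d5 : dist w' z' = f) :
    (p1 - p2)^2 + (q1 - q2)^2 ≤ (dist y' w')^2 ∧
    (dist y' w')^2 ≤ (p1 - p2)^2 + (q1 + q2)^2 := by
  set u : EuclideanSpace ℝ (Fin 3) := y' - x' with hu
  set v : EuclideanSpace ℝ (Fin 3) := z' - x' with hv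
  set p : EuclideanSpace ℝ (Fin 3) := w' - x' with hp
  have nu : ‖u‖ = b := by rw [hu, ← dist_eq_norm, dist_comm]; exact d1
  have nv : ‖v‖ = a := by rw [hv, ← dist_eq_norm]; exact d3
  have np : ‖p‖ = e := by rw [hp, ← dist_eq_norm, dist_comm]; exact d4
  have nuv : ‖u - v‖ = c := by
    rw [hu, hv, show y' - x' - (z' - x') = y' - z' by abel, ← dist_eq_norm]; exact d2
  have npv : ‖p - v‖ = f := by
    rw [hp, hv, show w' - x' - (z' - x') = w' - z' by abel, ← dist_eq_norm]; exact d5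
  have nup : ‖u - p‖ = dist y' w' := by
    rw [hu, hp, show y' - x' - (w' - x') = y' - w' by abel, ← dist_eq_norm]
  have huv : ⟪u, v⟫ = a * p1 := by
    have h := norm_sub_sq_real u v
    rw [nuv, nu, nv] at h
    linear_combination (1/2 : ℝ) * h + (1/2 : ℝ) * (h2 - h1)
  have hpv : ⟪p, v⟫ = a * p2 := by
    have h := norm_sub_sq_real p v
    rw [npv, np, nv] at h
    linear_combination (1/2 : ℝ) * h + (1/2 : ℝ) * (h4 - h3)
  set u' : EuclideanSpace ℝ (Fin 3) := a • u - p1 • v with hu'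
  set p' : EuclideanSpace ℝ (Fin 3) := a • p - p2 • v with hp'
  have nu2 : ‖u'‖^2 = (a * q1)^2 := by
    have h := norm_sub_sq_real (a • u) (p1 • v)
    rw [norm_smul, norm_smul, real_inner_smul_left, real_inner_smul_right,
      huv, nu, nv, Real.norm_eq_abs, Real.norm_eq_abs, abs_of_pos ha] at h
    rw [hu', h, mul_pow, mul_pow, sq_abs]
    linear_combination (-a^2) * h1
  have np2 : ‖p'‖^2 = (a * q2)^2 := by
    have h := norm_sub_sq_real (a • p) (p2 • v)
    rw [norm_smul, norm_smul, real_inner_smul_left, real_inner_smul_right,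
      hpv, np, nv, Real.norm_eq_abs, Real.norm_eq_abs, abs_of_pos ha] at h
    rw [hp', h, mul_pow, mul_pow, sq_abs]
    linear_combination (-a^2) * h3
  have nu'' : ‖u'‖ = a * q1 := by
    rw [← Real.sqrt_sq (norm_nonneg u'), nu2, Real.sqrt_sq (mul_nonneg ha.le hq1)]
  have np'' : ‖p'‖ = a * q2 := by
    rw [← Real.sqrt_sq (norm_nonneg p'), np2, Real.sqrt_sq (mul_nonneg ha.le hq2)]
  have hvu : ⟪v, u⟫ = a * p1 := by rw [real_inner_comm]; exact huv
  have hvp : ⟪v, p⟫ = a * p2 := by rw [real_inner_comm]; exact hpv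
  have hvv : ⟪v, v⟫ = a^2 := by rw [real_inner_self_eq_norm_sq, nv]
  have hip : ⟪u', p'⟫ = a^2 * ⟪u, p⟫ - a^2 * (p1 * p2) := by
    rw [hu', hp']
    simp only [inner_sub_left, inner_sub_right, real_inner_smul_left,
      real_inner_smul_right]
    linear_combination (-(a*p1)) * hvp + (p2*p1) * hvv - (a*p2) * huv
  have cs : |⟪u', p'⟫| ≤ (a * q1) * (a * q2) := by
    calc |⟪u', p'⟫| ≤ ‖u'‖ * ‖p'‖ := abs_real_inner_le_norm u' p'
    _ = (a * q1) * (a * q2) := by rw [nu'', np'']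
  have cs' := abs_le.mp cs
  have ha2 : (0:ℝ) < a^2 := by positivity
  have cs1 : ⟪u, p⟫ - p1 * p2 ≤ q1 * q2 := by
    have h := cs'.2; rw [hip] at h
    refine le_of_mul_le_mul_left ?_ ha2
    ring_nf; ring_nf at h; linarith
  have cs2 : -(q1 * q2) ≤ ⟪u, p⟫ - p1 * p2 := by
    have h := cs'.1; rw [hip] at h
    refine le_of_mul_le_mul_left ?_ ha2
    ring_nf; ring_nf at h; linarith
  have nup2 : (dist y' w')^2 = b^2 + e^2 - 2 * ⟪u, p⟫ := by
    have h := norm_sub_sq_real u p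
    rw [nup, nu, np] at h
    linarith
  have hm : (p1 - p2)^2 + (q1 - q2)^2 = b^2 + e^2 - 2*(p1*p2) - 2*(q1*q2) := by
    linear_combination h1 + h3
  have hM : (p1 - p2)^2 + (q1 + q2)^2 = b^2 + e^2 - 2*(p1*p2) + 2*(q1*q2) := by
    linear_combination h1 + h3
  exact ⟨by linarith, by linarith⟩

private def pt3' (a₁ a₂ a₃ : ℝ) : EuclideanSpace ℝ (Fin 3) :=
  (WithLp.equiv 2 (Fin 3 → ℝ)).symm ![a₁, a₂, a₃]

private lemma dist_pt3' (a₁ a₂ a₃ b₁ b₂ b₃ : ℝ) :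
    dist (pt3' a₁ a₂ a₃) (pt3' b₁ b₂ b₃) =
      Real.sqrt ((a₁ - b₁)^2 + (a₂ - b₂)^2 + (a₃ - b₃)^2) := by
  rw [EuclideanSpace.dist_eq]
  simp only [pt3', WithLp.equiv_symm_apply, PiLp.toLp_apply]
  rw [Fin.sum_univ_three]
  simp [Real.dist_eq, sq_abs]

private lemma exists_realization' (a b c e f p1 q1 p2 q2 t : ℝ)
    (hb : 0 ≤ b) (hc : 0 ≤ c) (ha : 0 ≤ a) (he : 0 ≤ e) (hf : 0 ≤ f)
    (hq1 : 0 ≤ q1) (hq2 : 0 ≤ q2)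
    (h1 : p1^2 + q1^2 = b^2) (h2 : (a - p1)^2 + q1^2 = c^2)
    (h3 : p2^2 + q2^2 = e^2) (h4 : (a - p2)^2 + q2^2 = f^2)
    (ht1 : (p1 - p2)^2 + (q1 - q2)^2 ≤ t) (ht2 : t ≤ (p1 - p2)^2 + (q1 + q2)^2) :
    ∃ x' y' z' w' : EuclideanSpace ℝ (Fin 3),
      dist x' y' = b ∧ dist y' z' = c ∧ dist z' x' = a ∧
      dist x' w' = e ∧ dist w' z' = f ∧ dist y' w' = Real.sqrt t := by
  have hr1 : (p1 - p2)^2 + (q1 - q2)^2 = (p1-p2)^2 + q1^2 + q2^2 - 2*(q1*q2) := by ring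
  have hr2 : (p1 - p2)^2 + (q1 + q2)^2 = (p1-p2)^2 + q1^2 + q2^2 + 2*(q1*q2) := by ring
  set cc : ℝ := if q1 * q2 = 0 then 1 else ((p1 - p2)^2 + q1^2 + q2^2 - t) / (2 * (q1 * q2)) with hcc
  have hcc1 : cc ≤ 1 ∧ -1 ≤ cc := by
    by_cases h : q1 * q2 = 0
    · simp [hcc, h]
    · have hq : 0 < q1 * q2 := lt_of_le_of_ne (mul_nonneg hq1 hq2) (Ne.symm h)
      constructor
      · rw [hcc]; simp only [h, if_false]
        rw [div_le_one (by linarith)]; linarith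
      · rw [hcc]; simp only [h, if_false]
        rw [le_div_iff₀ (by linarith)]; linarith
  have hs2 : 0 ≤ 1 - cc^2 := by nlinarith [hcc1.1, hcc1.2]
  set ss : ℝ := Real.sqrt (1 - cc^2) with hss
  have hss2 : ss^2 = 1 - cc^2 := Real.sq_sqrt hs2
  have keyt : (p1 - p2)^2 + (q1 - q2 * cc)^2 + (0 - q2 * ss)^2 = t := by
    by_cases h : q1 * q2 = 0
    · have hcc' : cc = 1 := by simp [hcc, h]
      have ht : t = (p1 - p2)^2 + (q1 - q2)^2 := by
        refine le_antisymm ?_ ht1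
        linarith
      have hss0 : ss ^ 2 = 0 := by rw [hss2, hcc']; ring
      rw [hcc']
      linear_combination q2^2 * hss0 - ht
    · have hq : 0 < q1 * q2 := lt_of_le_of_ne (mul_nonneg hq1 hq2) (Ne.symm h)
      have hcc' : 2 * (q1 * q2) * cc = (p1 - p2)^2 + q1^2 + q2^2 - t := by
        rw [hcc]; simp only [h, if_false]; field_simp; exact mul_div_cancel_left₀ _ h
      linear_combination q2^2 * hss2 - hcc'
  refine ⟨pt3' 0 0 0, pt3' p1 q1 0, pt3' a 0 0, pt3' p2 (q2 * cc) (q2 * ss), ?_, ?_, ?_, ?_, ?_, ?_⟩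
  · rw [dist_pt3', show (0 - p1)^2 + (0 - q1)^2 + ((0:ℝ) - 0)^2 = b^2 by linear_combination h1]
    exact Real.sqrt_sq hb
  · rw [dist_pt3', show (p1 - a)^2 + (q1 - 0)^2 + ((0:ℝ) - 0)^2 = c^2 by linear_combination h2]
    exact Real.sqrt_sq hc
  · rw [dist_pt3', show (a - 0)^2 + ((0:ℝ) - 0)^2 + ((0:ℝ) - 0)^2 = a^2 by ring]
    exact Real.sqrt_sq ha
  · rw [dist_pt3', show (0 - p2)^2 + (0 - q2 * cc)^2 + (0 - q2 * ss)^2 = e^2 by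
      linear_combination h3 + q2^2 * hss2]
    exact Real.sqrt_sq he
  · rw [dist_pt3', show (p2 - a)^2 + (q2 * cc - 0)^2 + (q2 * ss - 0)^2 = f^2 by
      linear_combination h4 + q2^2 * hss2]
    exact Real.sqrt_sq hf
  · rw [dist_pt3', keyt]

private lemma exists_pq' (a b c : ℝ) (ha : 0 < a) (hb : 0 ≤ b) (hc : 0 ≤ c)
    (t1 : b ≤ a + c) (t2 : c ≤ b + a) (t3 : a ≤ b + c) :
    ∃ p q : ℝ, 0 ≤ q ∧ p^2 + q^2 = b^2 ∧ (a - p)^2 + q^2 = c^2 := by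
  set p : ℝ := (b^2 + a^2 - c^2) / (2*a) with hp
  have hQ : (b^2 + a^2 - c^2)^2 ≤ (2*a*b)^2 := by
    nlinarith [mul_nonneg (mul_nonneg (show (0:ℝ) ≤ a+b+c by linarith)
      (show (0:ℝ) ≤ a+b-c by linarith)) (mul_nonneg (show (0:ℝ) ≤ c+a-b by linarith)
      (show (0:ℝ) ≤ c-a+b by linarith))]
  have hpa : 2*a*p = b^2 + a^2 - c^2 := by rw [hp]; field_simp
  have hpp : (2*a*p)^2 = (b^2 + a^2 - c^2)^2 := by rw [hpa]
  have hq0 : 0 ≤ b^2 - p^2 := by nlinarith [mul_pos ha ha]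
  refine ⟨p, Real.sqrt (b^2 - p^2), Real.sqrt_nonneg _, ?_, ?_⟩
  · rw [Real.sq_sqrt hq0]; ring
  · rw [Real.sq_sqrt hq0]; linear_combination (-1 : ℝ) * hpa


/-- Proposition 6.2: for four distinct points, exactly one of the following holds:
they embed isometrically into `ℝ³`, they are under-distance with respect to `{y,w}`,
or they are over-distance with respect to `{y,w}`. -/
theorem embeds_or_under_or_over {X : Type*} [MetricSpace X] (x y z w : X)
    (hxy : x ≠ y) (hxz : x ≠ z) (hxw : x ≠ w)
    (hyz : y ≠ z) (hyw : y ≠ w) (hzw : z ≠ w) :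
    (EmbedsInR3 x y z w ∧ ¬ UnderDistance x y z w ∧ ¬ OverDistance x y z w) ∨
    (¬ EmbedsInR3 x y z w ∧ UnderDistance x y z w ∧ ¬ OverDistance x y z w) ∨
    (¬ EmbedsInR3 x y z w ∧ ¬ UnderDistance x y z w ∧ OverDistance x y z w) := by
  have ha : 0 < dist x z := dist_pos.mpr hxz
  obtain ⟨p1, q1, hq1, h1, h2⟩ : ∃ p q : ℝ, 0 ≤ q ∧ p^2 + q^2 = (dist x y)^2 ∧
      (dist x z - p)^2 + q^2 = (dist y z)^2 := by
    refine exists_pq' _ _ _ ha dist_nonneg dist_nonneg ?_ ?_ ?_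
    · have h := dist_triangle x z y; rw [dist_comm z y] at h; exact h
    · have h := dist_triangle y x z; rw [dist_comm y x] at h; exact h
    · exact dist_triangle x y z
  obtain ⟨p2, q2, hq2, h3, h4⟩ : ∃ p q : ℝ, 0 ≤ q ∧ p^2 + q^2 = (dist x w)^2 ∧
      (dist x z - p)^2 + q^2 = (dist w z)^2 := by
    refine exists_pq' _ _ _ ha dist_nonneg dist_nonneg ?_ ?_ ?_
    · have h := dist_triangle x z w; rw [dist_comm z w] at h; exact h
    · have h := dist_triangle w x z; rw [dist_comm w x] at h; exact h
    · exact dist_triangle x w z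
  have hmM : (p1-p2)^2 + (q1-q2)^2 ≤ (p1-p2)^2 + (q1+q2)^2 := by
    nlinarith [mul_nonneg hq1 hq2]
  have hm0 : (0:ℝ) ≤ (p1-p2)^2 + (q1-q2)^2 := by positivity
  have bound := fun (x' y' z' w' : EuclideanSpace ℝ (Fin 3)) d1 d2 d3 d4 d5 =>
    realization_bound' (dist x z) (dist x y) (dist y z) (dist x w) (dist w z)
      p1 q1 p2 q2 ha hq1 hq2 h1 h2 h3 h4 x' y' z' w' d1 d2 d3 d4 d5
  have real := fun (t : ℝ) ht1 ht2 =>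
    exists_realization' (dist x z) (dist x y) (dist y z) (dist x w) (dist w z)
      p1 q1 p2 q2 t dist_nonneg dist_nonneg ha.le dist_nonneg dist_nonneg
      hq1 hq2 h1 h2 h3 h4 ht1 ht2
  rcases lt_or_ge ((dist y w)^2) ((p1-p2)^2 + (q1-q2)^2) with hK1 | hK1
  · -- under-distance case
    have hU : UnderDistance x y z w := by
      intro x' y' z' w' d1 d2 d3 d4 d5
      rw [dist_comm z x] at d3
      have hb := bound x' y' z' w' d1 d2 d3 d4 d5
      exact lt_of_pow_lt_pow_left₀ 2 dist_nonneg (lt_of_lt_of_le hK1 hb.1)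
    refine Or.inr (Or.inl ⟨?_, hU, ?_⟩)
    · rintro ⟨x', y', z', w', e1, e2, e3, e4, e5, e6⟩
      have h := hU x' y' z' w' e1 e4 (by rw [dist_comm z' x', e2, dist_comm x z])
        e3 (by rw [dist_comm w' z', e6, dist_comm z w])
      rw [e5] at h; exact lt_irrefl _ h
    · intro hO
      obtain ⟨x', y', z', w', r1, r2, r3, r4, r5, r6⟩ :=
        real ((p1-p2)^2 + (q1-q2)^2) le_rfl hmM
      have h5 := hO x' y' z' w' r1 r2 (by rw [r3, dist_comm]) r4 r5
      rw [r6] at h5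
      have h6 : dist y w < Real.sqrt ((p1-p2)^2 + (q1-q2)^2) := by
        refine lt_of_pow_lt_pow_left₀ 2 (Real.sqrt_nonneg _) ?_
        rw [Real.sq_sqrt hm0]; exact hK1
      linarith
  · rcases lt_or_ge ((p1-p2)^2 + (q1+q2)^2) ((dist y w)^2) with hK2 | hK2
    · -- over-distance case
      have hO : OverDistance x y z w := by
        intro x' y' z' w' d1 d2 d3 d4 d5
        rw [dist_comm z x] at d3
        have hb := bound x' y' z' w' d1 d2 d3 d4 d5
        exact lt_of_pow_lt_pow_left₀ 2 dist_nonneg (lt_of_le_of_lt hb.2 hK2)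
      refine Or.inr (Or.inr ⟨?_, ?_, hO⟩)
      · rintro ⟨x', y', z', w', e1, e2, e3, e4, e5, e6⟩
        have h := hO x' y' z' w' e1 e4 (by rw [dist_comm z' x', e2, dist_comm x z])
          e3 (by rw [dist_comm w' z', e6, dist_comm z w])
        rw [e5] at h; exact lt_irrefl _ h
      · intro hU
        obtain ⟨x', y', z', w', r1, r2, r3, r4, r5, r6⟩ :=
          real ((p1-p2)^2 + (q1+q2)^2) hmM le_rfl
        have h5 := hU x' y' z' w' r1 r2 (by rw [r3, dist_comm]) r4 r5
        rw [r6] at h5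
        have h6 : Real.sqrt ((p1-p2)^2 + (q1+q2)^2) < dist y w := by
          refine lt_of_pow_lt_pow_left₀ 2 dist_nonneg ?_
          rw [Real.sq_sqrt (le_trans hm0 hmM)]; exact hK2
        linarith
    · -- embedding case
      obtain ⟨x', y', z', w', r1, r2, r3, r4, r5, r6⟩ := real ((dist y w)^2) hK1 hK2
      rw [Real.sqrt_sq dist_nonneg] at r6
      refine Or.inl ⟨⟨x', y', z', w', r1, by rw [dist_comm x' z', r3], r4, r2, r6,
        by rw [dist_comm z' w', r5, dist_comm w z]⟩, ?_, ?_⟩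
      · intro hU
        have h := hU x' y' z' w' r1 r2 (by rw [r3, dist_comm]) r4 r5
        rw [r6] at h; exact lt_irrefl _ h
      · intro hO
        have h := hO x' y' z' w' r1 r2 (by rw [r3, dist_comm]) r4 r5
        rw [r6] at h; exact lt_irrefl _ h
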